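/- Let d ≥ 1 and let G be a connected graph with vertex set partitioned into P and an independent set N such that every vertex of N has a neighbour in P. Then G has a red-blue d-colouring in which all vertices of P are blue if and only if G has a red-blue d-colouring in which exactly one vertex (which lies in N) is red and all other vertices are blue. -/

import Mathlib

open SimpleGraph

/-- A red-blue `d`-colouring (red = `true`, blue = `false`). -/
def IsRBColouring {V : Type*} (G : SimpleGraph V) (d : ℕ) (c : V → Bool) : Prop :=
  (∃ v, c v = true) ∧ (∃ v, c v = false) ∧
    ∀ v, {u | G.Adj v u ∧ c u ≠ c v}.ncard ≤ d

theorem stmt19 {V : Type*} [Fintype V] (G : SimpleGraph V) (d : ℕ) (hd : 1 ≤ d)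
    (hG : G.Connected) (P N : Set V) (hPN : P = Nᶜ)
    (hind : ∀ u ∈ N, ∀ v ∈ N, ¬G.Adj u v)
    (hdom : ∀ v ∈ N, ∃ u ∈ P, G.Adj v u) :
    (∃ c : V → Bool, IsRBColouring G d c ∧ ∀ v ∈ P, c v = false) ↔
      (∃ c : V → Bool, IsRBColouring G d c ∧
        ∃ v ∈ N, c v = true ∧ ∀ u : V, u ≠ v → c u = false) := by
  classical
  constructor
  · rintro ⟨c, ⟨⟨v, hv⟩, -, hdeg⟩, hPblue⟩
    have hvN : v ∈ N := by
      by_contra h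
      have : v ∈ P := by rw [hPN]; exact h
      simp [hPblue v this] at hv
    refine ⟨fun u => if u = v then true else false, ⟨⟨v, by simp⟩, ?_, ?_⟩,
      v, hvN, by simp, fun u hu => by simp [hu]⟩
    · obtain ⟨u, hu, hadj⟩ := hdom v hvN
      have huv : u ≠ v := fun h => by subst h; exact (hPN ▸ hu) hvN
      exact ⟨u, by simp [huv]⟩
    · intro w
      by_cases hw : w = v
      · subst hw
        have hset : {u | G.Adj w u ∧ (if u = w then true else false) ≠
            (if w = w then true else false)} = {u | G.Adj w u ∧ c u ≠ c w} := by
          ext u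
          simp only [Set.mem_setOf_eq, and_congr_right_iff]
          intro hadj
          have huw : u ≠ w := fun h => by subst h; exact G.irrefl hadj
          have huP : u ∈ P := by
            rw [hPN]
            intro huN
            exact hind w hvN u huN hadj
          simp [huw, hPblue u huP, hv]
        rw [hset]
        exact hdeg w
      · calc {u | G.Adj w u ∧ (if u = v then true else false) ≠
              (if w = v then true else false)}.ncard
            ≤ ({v} : Set V).ncard := by
              apply Set.ncard_le_ncard _ (Set.finite_singleton v)
              rintro u ⟨-, hne⟩
              simp only [hw, if_false] at hne
              by_cases h : u = v
              · simp [h]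
              · simp [h] at hne
          _ ≤ d := by simpa using hd
  · rintro ⟨c, hc, v, hvN, hv, hblue⟩
    exact ⟨c, hc, fun u hu => hblue u (fun h => by subst h; exact (hPN ▸ hu) hvN)⟩
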